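/- Let R be a commutative Noetherian UFD and M a finitely presented R-module generated by p elements. Then gcd(ann_R(M)) divides ord_R(M), and ord_R(M) divides gcd(ann_R(M))^p, where ord_R(M) denotes the gcd of the zeroth Fitting ideal. -/

import Mathlib

/-- The zeroth Fitting ideal of a presentation matrix `A ∈ M_{q,p}(R)`:
the ideal generated by the `p × p` minors of `A`. -/
def fitt0 {R : Type*} [CommRing R] {q p : ℕ} (A : Matrix (Fin q) (Fin p) R) : Ideal R :=
  Ideal.span { d : R | ∃ r : Fin p ↪ Fin q, d = (A.submatrix r id).det }

/-- `d` is a greatest common divisor of the set `S`. -/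
def IsGCDOf {R : Type*} [CommRing R] (d : R) (S : Set R) : Prop :=
  (∀ s ∈ S, d ∣ s) ∧ ∀ c : R, (∀ s ∈ S, c ∣ s) → c ∣ d

-- Step A: any det (C * A) lies in fitt0 A
theorem det_mul_mem_fitt0 {R : Type*} [CommRing R] {q p : ℕ}
    (C : Matrix (Fin p) (Fin q) R) (A : Matrix (Fin q) (Fin p) R) :
    (C * A).det ∈ fitt0 A := by
  classical
  have hrows : ∀ i, (C * A) i = ∑ j : Fin q, C i j • A j := by
    intro i; funext k; simp [Matrix.mul_apply, Finset.sum_apply]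
  have h1 : (C * A).det
      = ∑ f : Fin p → Fin q, Matrix.detRowAlternating (fun i => C i (f i) • A (f i)) := by
    rw [show (C * A).det = Matrix.detRowAlternating (C * A) from rfl]
    rw [show (C * A : Matrix (Fin p) (Fin p) R) = fun i => ∑ j : Fin q, C i j • A j from
      funext hrows]
    exact (Matrix.detRowAlternating (R := R) (n := Fin p)).toMultilinearMap.map_sum
      (g := fun i j => C i j • A j)
  rw [h1]
  refine Ideal.sum_mem _ (fun f _ => ?_)
  have h2 : Matrix.detRowAlternating (fun i => C i (f i) • A (f i))
      = (∏ i, C i (f i)) • Matrix.detRowAlternating (fun i => A (f i)) :=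
    (Matrix.detRowAlternating (R := R) (n := Fin p)).toMultilinearMap.map_smul_univ _ _
  rw [h2, smul_eq_mul]
  by_cases hf : Function.Injective f
  · refine Ideal.mul_mem_left _ _ (Ideal.subset_span ?_)
    exact ⟨⟨f, hf⟩, rfl⟩
  · have : ∃ i j : Fin p, f i = f j ∧ i ≠ j := by
      simp only [Function.Injective, not_forall] at hf
      obtain ⟨i, j, h, hne⟩ := hf
      exact ⟨i, j, h, hne⟩
    obtain ⟨i, j, hij, hne⟩ := this
    rw [(Matrix.detRowAlternating (R := R) (n := Fin p)).map_eq_zero_of_eq _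
      (by rw [hij]) hne]
    simp

-- Step B: fitt0 ≤ annihilator
theorem fitt0_le_ann {R : Type*} [CommRing R]
    {M : Type*} [AddCommGroup M] [Module R M] {q p : ℕ}
    {A : Matrix (Fin q) (Fin p) R} {π : (Fin p → R) →ₗ[R] M}
    (hsurj : Function.Surjective π)
    (hker : LinearMap.ker π = LinearMap.range A.vecMulLinear) :
    fitt0 A ≤ Module.annihilator R M := by
  classical
  rw [fitt0, Ideal.span_le]
  rintro g ⟨r, rfl⟩
  rw [SetLike.mem_coe, Module.mem_annihilator]
  intro m
  obtain ⟨x, rfl⟩ := hsurj m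
  rw [← map_smul, ← LinearMap.mem_ker, hker]
  set B := A.submatrix r id with hB
  set v : Fin p → R := Matrix.vecMul x B.adjugate with hv
  refine ⟨Function.extend r v 0, ?_⟩
  rw [Matrix.vecMulLinear_apply]
  have key : Matrix.vecMul (Function.extend r v 0) A = Matrix.vecMul v B := by
    funext j
    simp only [Matrix.vecMul, dotProduct]
    rw [← Finset.sum_subset (Finset.subset_univ (Finset.univ.map r))
      (fun i _ hi => by
        rw [Function.extend_apply' _ _ _ (by
          rintro ⟨k, rfl⟩
          exact hi (Finset.mem_map.mpr ⟨k, Finset.mem_univ _, rfl⟩))]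
        simp)]
    rw [Finset.sum_map Finset.univ r (fun i => Function.extend r v 0 i * A i j)]
    apply Finset.sum_congr rfl
    intro k _
    rw [r.injective.extend_apply]
    rfl
  rw [key, hv, Matrix.vecMul_vecMul, Matrix.adjugate_mul]
  funext j
  simp [Matrix.vecMul, dotProduct, Matrix.smul_apply, Matrix.one_apply, mul_comm]

-- Step C: a ^ p ∈ fitt0 for a in the annihilator
theorem pow_mem_fitt0 {R : Type*} [CommRing R]
    {M : Type*} [AddCommGroup M] [Module R M] {q p : ℕ}
    {A : Matrix (Fin q) (Fin p) R} {π : (Fin p → R) →ₗ[R] M}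
    (hsurj : Function.Surjective π)
    (hker : LinearMap.ker π = LinearMap.range A.vecMulLinear)
    {a : R} (ha : a ∈ Module.annihilator R M) :
    a ^ p ∈ fitt0 A := by
  classical
  rw [Module.mem_annihilator] at ha
  have hbasis : ∀ j : Fin p, ∃ c : Fin q → R,
      Matrix.vecMul c A = a • (Pi.single j 1 : Fin p → R) := by
    intro j
    have : (a • (Pi.single j 1 : Fin p → R)) ∈ LinearMap.ker π := by
      rw [LinearMap.mem_ker, map_smul]
      have := ha (π (Pi.single j 1))
      simpa using this
    rw [hker] at this
    obtain ⟨c, hc⟩ := this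
    exact ⟨c, by rw [← hc, Matrix.vecMulLinear_apply]⟩
  choose C hC using hbasis
  have hCA : (Matrix.of C) * A = a • (1 : Matrix (Fin p) (Fin p) R) := by
    funext j k
    have := congrFun (hC j) k
    simp only [Matrix.vecMul, dotProduct] at this
    simp only [Matrix.mul_apply, Matrix.of_apply, Matrix.smul_apply, Matrix.one_apply]
    rw [this]
    by_cases h : j = k <;> simp [h, Pi.single_apply]
  have := det_mul_mem_fitt0 (Matrix.of C) A
  rwa [hCA, Matrix.det_smul, Matrix.det_one, mul_one, Fintype.card_fin] at this

open UniqueFactorizationMonoid in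
theorem gcd_pow_dvd_lemma {R : Type*} [CommRing R] [IsDomain R] [UniqueFactorizationMonoid R]
    {S : Set R} (hS : S.Nonempty) {d e : R} {p : ℕ} (he : IsGCDOf e S)
    (h : ∀ a ∈ S, d ∣ a ^ p) : d ∣ e ^ p := by
  classical
  letI : NormalizationMonoid R := UniqueFactorizationMonoid.normalizationMonoid.toNormalizationMonoid
  by_cases he0 : e = 0
  · obtain ⟨a, ha⟩ := hS
    have ha0 : a = 0 := by
      have := he.1 a ha
      rwa [he0, zero_dvd_iff] at this
    have := h a ha
    rwa [ha0, ← he0] at this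
  by_cases hd0 : d = 0
  · exfalso
    rcases Nat.eq_zero_or_pos p with hp | hp
    · obtain ⟨a, ha⟩ := hS
      have := h a ha
      rw [hp, pow_zero, hd0, zero_dvd_iff] at this
      exact one_ne_zero this
    · apply he0
      have : (0 : R) ∣ e := he.2 0 (fun a ha => by
        have := h a ha
        rw [hd0, zero_dvd_iff] at this
        rw [zero_dvd_iff]
        exact pow_eq_zero_iff hp.ne' |>.mp this)
      rwa [zero_dvd_iff] at this
  have hep : e ^ p ≠ 0 := pow_ne_zero _ he0
  rw [dvd_iff_normalizedFactors_le_normalizedFactors hd0 hep, Multiset.le_iff_count]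
  intro π
  by_cases hπ : π ∈ normalizedFactors d
  swap
  · simp [Multiset.count_eq_zero_of_notMem hπ]
  have hprime : Prime π := prime_of_normalized_factor π hπ
  have hne : ¬ (π * e ∣ e) := by
    rintro ⟨t, ht⟩
    have h1 : e * 1 = e * (π * t) := by linear_combination ht
    have := mul_left_cancel₀ he0 h1
    exact hprime.not_isUnit (IsUnit.of_mul_eq_one _ this.symm)
  have hex : ∃ a ∈ S, ¬ (π * e ∣ a) := by
    by_contra hall
    push_neg at hall
    exact hne (he.2 _ hall)
  obtain ⟨a, haS, hna⟩ := hex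
  obtain ⟨b, rfl⟩ := he.1 a haS
  have ha0 : e * b ≠ 0 := fun h0 => hna (h0 ▸ dvd_zero _)
  have hb0 : b ≠ 0 := fun h0 => ha0 (by rw [h0, mul_zero])
  have hπb : ¬ π ∣ b := by
    rintro ⟨t, rfl⟩
    exact hna ⟨t, by ring⟩
  have hcount : Multiset.count π (normalizedFactors (e * b))
      = Multiset.count π (normalizedFactors e) := by
    rw [normalizedFactors_mul he0 hb0, Multiset.count_add,
      Multiset.count_eq_zero_of_notMem (fun hmem => hπb (dvd_of_mem_normalizedFactors hmem)),
      add_zero]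
  have hd1 := (dvd_iff_normalizedFactors_le_normalizedFactors hd0
    (pow_ne_zero p ha0)).mp (h _ haS)
  calc Multiset.count π (normalizedFactors d)
      ≤ Multiset.count π (normalizedFactors ((e * b) ^ p)) := Multiset.le_iff_count.mp hd1 π
    _ = p * Multiset.count π (normalizedFactors (e * b)) := by
        rw [normalizedFactors_pow, Multiset.count_nsmul]
    _ = p * Multiset.count π (normalizedFactors e) := by rw [hcount]
    _ = Multiset.count π (normalizedFactors (e ^ p)) := by
        rw [normalizedFactors_pow, Multiset.count_nsmul]

theorem stmt1 (R : Type*) [CommRing R] [IsDomain R] [IsNoetherianRing R]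
    [UniqueFactorizationMonoid R]
    (M : Type*) [AddCommGroup M] [Module R M] (q p : ℕ)
    (A : Matrix (Fin q) (Fin p) R) (π : (Fin p → R) →ₗ[R] M)
    (hsurj : Function.Surjective π)
    (hker : LinearMap.ker π = LinearMap.range A.vecMulLinear)
    (d e : R)
    (hd : IsGCDOf d (fitt0 A : Set R))
    (he : IsGCDOf e (Module.annihilator R M : Set R)) :
    e ∣ d ∧ d ∣ e ^ p := by
  constructor
  · exact hd.2 e (fun s hs => he.1 s (fitt0_le_ann hsurj hker hs))
  · exact gcd_pow_dvd_lemma ⟨0, by simp⟩ he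
      (fun a ha => hd.1 _ (pow_mem_fitt0 hsurj hker ha))
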